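/- Fix ε ∈ (0, 1/3) and T > 0. There exists x₀ = x₀(ε) > 0 such that for all x ≥ x₀, setting θ₂' := ⌈ 2 x^{3/2}/(3π (1−ε)^{3/2}) + 1/2 ⌉ and f(z) := x − (1−ε) ((3π/2)(z − 1/2))^{2/3}, one has ∑_{k=θ₂'}^{∞} exp( T^{1/3} f(k) ) ≤ √(2/π) x^{3/4}/(1−ε)^{3/4} + 4/(T π (1−ε)^3) + 3. -/

import Mathlib

open Real

private lemma amgm3 {A y : ℝ} (hA : 0 ≤ A) (hy : 0 ≤ y) :
    A ^ ((2:ℝ)/3) * (A + y) ^ ((1:ℝ)/3) ≤ A + y / 3 := by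
  have h := Real.geom_mean_le_arith_mean3_weighted (by norm_num : (0:ℝ) ≤ 1/3)
    (by norm_num : (0:ℝ) ≤ 1/3) (by norm_num : (0:ℝ) ≤ 1/3) hA hA
    (by linarith : (0:ℝ) ≤ A + y) (by norm_num)
  have hsplit : A ^ ((2:ℝ)/3) = A ^ ((1:ℝ)/3) * A ^ ((1:ℝ)/3) := by
    rw [← Real.rpow_add' hA (by norm_num)]; norm_num
  rw [hsplit]
  calc A ^ ((1:ℝ)/3) * A ^ ((1:ℝ)/3) * (A+y) ^ ((1:ℝ)/3)
      ≤ 1/3*A + 1/3*A + 1/3*(A+y) := h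
    _ = A + y/3 := by ring

private lemma gap_lemma {A y : ℝ} (hA : 2 ≤ A) (hy : Real.sqrt (2*A) ≤ y) :
    A ^ ((2:ℝ)/3) + 1/2 * y ^ ((1:ℝ)/3) ≤ (A + y) ^ ((2:ℝ)/3) := by
  have hA0 : (0:ℝ) ≤ A := by linarith
  have hy2 : (2:ℝ) ≤ y := by
    refine le_trans ?_ hy
    rw [Real.le_sqrt (by norm_num) (by linarith)]
    nlinarith
  have hy0 : (0:ℝ) ≤ y := by linarith
  have hAy0 : (0:ℝ) < A + y := by linarith
  have hAle : 2*A ≤ y^2 := by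
    have := Real.sq_sqrt (by linarith : (0:ℝ) ≤ 2*A)
    nlinarith [pow_le_pow_left₀ (Real.sqrt_nonneg (2*A)) hy 2]
  -- Key 1
  have e1 : (A+y) ^ ((2:ℝ)/3) * (A+y) ^ ((1:ℝ)/3) = A + y := by
    rw [← Real.rpow_add hAy0]; norm_num
  have key1 : 2/3 * y ≤ ((A+y) ^ ((2:ℝ)/3) - A ^ ((2:ℝ)/3)) * (A+y) ^ ((1:ℝ)/3) := by
    have := amgm3 hA0 hy0
    have expand : ((A+y) ^ ((2:ℝ)/3) - A ^ ((2:ℝ)/3)) * (A+y) ^ ((1:ℝ)/3)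
        = (A + y) - A ^ ((2:ℝ)/3) * (A+y) ^ ((1:ℝ)/3) := by
      rw [sub_mul, e1]
    rw [expand]; linarith
  -- Key 2
  have key2 : 1/2 * y ^ ((1:ℝ)/3) * (A+y) ^ ((1:ℝ)/3) ≤ 2/3 * y := by
    have hmul : y ^ ((1:ℝ)/3) * (A+y) ^ ((1:ℝ)/3) = (y*(A+y)) ^ ((1:ℝ)/3) :=
      (Real.mul_rpow hy0 hAy0.le).symm
    have ht : y*(A+y) ≤ (4/3*y)^(3:ℕ) := by nlinarith
    have hcube : ((4/3*y)^(3:ℕ) : ℝ) ^ ((1:ℝ)/3) = 4/3*y := by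
      rw [← Real.rpow_natCast (4/3*y) 3, ← Real.rpow_mul (by linarith)]
      norm_num
    have h2 : (y*(A+y)) ^ ((1:ℝ)/3) ≤ 4/3*y := by
      rw [← hcube]
      exact Real.rpow_le_rpow (by positivity) ht (by norm_num)
    calc 1/2 * y ^ ((1:ℝ)/3) * (A+y) ^ ((1:ℝ)/3)
        = 1/2 * ((y*(A+y)) ^ ((1:ℝ)/3)) := by rw [← hmul]; ring
      _ ≤ 1/2 * (4/3*y) := by linarith
      _ = 2/3 * y := by ring
  have hpos : (0:ℝ) < (A+y) ^ ((1:ℝ)/3) := Real.rpow_pos_of_pos hAy0 _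
  have := le_trans key2 key1
  have h := (mul_le_mul_iff_of_pos_right hpos).mp this
  linarith

private lemma exp_neg_le {u : ℝ} (hu : 0 < u) : Real.exp (-u) ≤ 720 / u ^ 6 := by
  have h : u ^ 6 / 720 ≤ Real.exp u := by
    have := Real.pow_div_factorial_le_exp u hu.le 6
    norm_num [Nat.factorial] at this
    convert this using 2
  have h6 : (0:ℝ) < u ^ 6 := by positivity
  have h' : u ^ 6 ≤ 720 * Real.exp u := by
    rw [div_le_iff₀ (by norm_num : (0:ℝ) < 720)] at h; linarith
  rw [Real.exp_neg, le_div_iff₀ h6]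
  have hi : (0:ℝ) < (Real.exp u)⁻¹ := inv_pos.mpr (Real.exp_pos u)
  nlinarith [mul_inv_cancel₀ (ne_of_gt (Real.exp_pos u))]

set_option maxHeartbeats 1000000 in
/-- eq. TailSecUpperBound: fix `ε ∈ (0,1/3)` and `T > 0`. There exists
`x₀ > 0` such that for all `x ≥ x₀`, with `θ₂' := ⌈2 x^(3/2)/(3π(1−ε)^(3/2)) + 1/2⌉` and
`f(z) := x − (1−ε)((3π/2)(z − 1/2))^(2/3)`, the sum over integers `k ≥ θ₂'` of
`exp(T^(1/3) f(k))` is at most `√(2/π) x^(3/4)/(1−ε)^(3/4) + 4/(Tπ(1−ε)^3) + 3`. -/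
theorem tail_section_upper_bound (ε T : ℝ) (hε : ε ∈ Set.Ioo (0 : ℝ) (1 / 3)) (hT : 0 < T) :
    ∃ x₀ > (0 : ℝ), ∀ x ≥ x₀,
      Summable (fun k : ℕ =>
        if ⌈2 * x ^ ((3 : ℝ) / 2) / (3 * π * (1 - ε) ^ ((3 : ℝ) / 2)) + 1 / 2⌉₊ ≤ k then
          Real.exp (T ^ ((1 : ℝ) / 3) *
            (x - (1 - ε) * ((3 * π / 2) * ((k : ℝ) - 1 / 2)) ^ ((2 : ℝ) / 3)))
        else 0) ∧
      (∑' k : ℕ,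
        if ⌈2 * x ^ ((3 : ℝ) / 2) / (3 * π * (1 - ε) ^ ((3 : ℝ) / 2)) + 1 / 2⌉₊ ≤ k then
          Real.exp (T ^ ((1 : ℝ) / 3) *
            (x - (1 - ε) * ((3 * π / 2) * ((k : ℝ) - 1 / 2)) ^ ((2 : ℝ) / 3)))
        else 0) ≤
        Real.sqrt (2 / π) * x ^ ((3 : ℝ) / 4) / (1 - ε) ^ ((3 : ℝ) / 4) +
          4 / (T * π * (1 - ε) ^ 3) + 3 := by
  obtain ⟨hε0, hε3⟩ := hε
  have hπ : (0:ℝ) < π := Real.pi_pos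
  have hπ3 : (3:ℝ) ≤ π := Real.pi_gt_three.le
  have hπ4 : π ≤ 4 := Real.pi_le_four
  have h1ε : (0:ℝ) < 1 - ε := by linarith
  have h1ε1 : 1 - ε ≤ 1 := by linarith
  have hT3 : (0:ℝ) < T ^ ((1:ℝ)/3) := Real.rpow_pos_of_pos hT _
  set c : ℝ := T ^ ((1:ℝ)/3) * (1 - ε) / 2 with hc
  have hc0 : 0 < c := by positivity
  set K : ℝ := 720 / c ^ 6 with hK
  have hK0 : 0 ≤ K := by positivity
  -- the base summable series
  have hbase : Summable (fun j : ℕ => 1 / ((j:ℝ)^2 + 1)) := by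
    have h2 : Summable (fun j : ℕ => 2 * (1 / (((j:ℕ):ℝ) + 1)^2)) := by
      apply Summable.mul_left
      have := (summable_nat_add_iff 1).mpr
        (Real.summable_one_div_nat_pow.mpr (by norm_num : 2 ≤ 2))
      apply this.congr
      intro n; push_cast; ring
    refine Summable.of_nonneg_of_le (fun j => by positivity) (fun j => ?_) h2
    have hj0 : (0:ℝ) ≤ (j:ℝ) := Nat.cast_nonneg j
    rw [mul_one_div, div_le_div_iff₀ (by positivity) (by positivity)]
    nlinarith [sq_nonneg ((j:ℝ) - 1)]
  set S : ℝ := ∑' j : ℕ, 1 / ((j:ℝ)^2 + 1) with hS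
  have hS0 : 0 ≤ S := tsum_nonneg (fun j => by positivity)
  -- δ
  set δ : ℝ := Real.sqrt (2/π) - 2 * Real.sqrt 2 / (3*π) with hδ
  have hδ0 : 0 < δ := by
    have hs1 : 2 * Real.sqrt 2 / (3*π) ≤ 1/3 := by
      have h2 : Real.sqrt 2 ≤ 1.5 := by
        rw [show (1.5:ℝ) = Real.sqrt (1.5^2) from (Real.sqrt_sq (by norm_num)).symm]
        exact Real.sqrt_le_sqrt (by norm_num)
      rw [div_le_iff₀ (by positivity)]
      nlinarith
    have hs2 : (0.4:ℝ) ≤ Real.sqrt (2/π) := by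
      rw [Real.le_sqrt (by norm_num) (by positivity)]
      rw [le_div_iff₀ hπ]
      nlinarith
    rw [hδ]; norm_num at hs2 ⊢; linarith
  set M : ℝ := 2*K*S/δ with hM
  have hM0 : 0 ≤ M := by positivity
  refine ⟨max 4 ((M+1)^2), lt_of_lt_of_le (by norm_num) (le_max_left _ _), fun x hx => ?_⟩
  have hx4 : (4:ℝ) ≤ x := le_trans (le_max_left _ _) hx
  have hx0 : (0:ℝ) < x := by linarith
  have hx1 : (1:ℝ) ≤ x := by linarith
  have hxM2 : (M+1)^2 ≤ x := le_trans (le_max_right _ _) hx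
  have hxM : M + 1 ≤ Real.sqrt x := by
    rw [show Real.sqrt x = Real.sqrt x from rfl, Real.le_sqrt (by positivity) hx0.le]
    exact hxM2
  have hsx34 : Real.sqrt x ≤ x ^ ((3:ℝ)/4) := by
    rw [Real.sqrt_eq_rpow]
    exact Real.rpow_le_rpow_of_exponent_le hx1 (by norm_num)
  -- abbreviations
  set D : ℝ := 2 * x ^ ((3 : ℝ) / 2) / (3 * π * (1 - ε) ^ ((3 : ℝ) / 2)) with hD
  set θ : ℕ := ⌈D + 1/2⌉₊ with hθ
  set A : ℝ := x ^ ((3:ℝ)/2) / (1 - ε) ^ ((3:ℝ)/2) with hA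
  have hA0 : 0 < A := by positivity
  have hDA : 3 * π / 2 * D = A := by
    rw [hD, hA]; field_simp
  have hxA' : x ≤ A := by
    have h1 : x ≤ x ^ ((3:ℝ)/2) := by
      nth_rewrite 1 [show x = x ^ ((1:ℝ)) from (Real.rpow_one x).symm]
      exact Real.rpow_le_rpow_of_exponent_le hx1 (by norm_num)
    have h2 : (1-ε) ^ ((3:ℝ)/2) ≤ 1 := Real.rpow_le_one h1ε.le h1ε1 (by norm_num)
    have h3 : x ^ ((3:ℝ)/2) ≤ A := by
      rw [hA, le_div_iff₀ (by positivity)]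
      exact mul_le_of_le_one_right (by positivity) h2
    linarith
  have hA2 : (2:ℝ) ≤ A := by linarith
  have hxAeq : (1 - ε) * A ^ ((2:ℝ)/3) = x := by
    rw [hA, Real.div_rpow (by positivity) (by positivity),
      ← Real.rpow_mul hx0.le, ← Real.rpow_mul h1ε.le]
    norm_num
    field_simp
  have hsqrtA : Real.sqrt A = x ^ ((3:ℝ)/4) / (1-ε) ^ ((3:ℝ)/4) := by
    rw [Real.sqrt_eq_rpow, hA, Real.div_rpow (by positivity) (by positivity),
      ← Real.rpow_mul hx0.le, ← Real.rpow_mul h1ε.le]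
    norm_num
  have hθD : D + 1/2 ≤ (θ:ℝ) := Nat.le_ceil _
  -- bound m from below for k ≥ θ
  have hmA : ∀ k : ℕ, θ ≤ k → A ≤ 3 * π / 2 * ((k:ℝ) - 1/2) := by
    intro k hk
    have hk' : (θ:ℝ) ≤ (k:ℝ) := Nat.cast_le.mpr hk
    rw [← hDA]
    have : D ≤ (k:ℝ) - 1/2 := by linarith
    exact mul_le_mul_of_nonneg_left this (by positivity)
  -- each term with k ≥ θ is at most 1
  have hbound1 : ∀ k : ℕ, θ ≤ k →
      Real.exp (T ^ ((1 : ℝ) / 3) *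
        (x - (1 - ε) * ((3 * π / 2) * ((k : ℝ) - 1 / 2)) ^ ((2 : ℝ) / 3))) ≤ 1 := by
    intro k hk
    rw [Real.exp_le_one_iff]
    apply mul_nonpos_of_nonneg_of_nonpos hT3.le
    have h1 : A ^ ((2:ℝ)/3) ≤ ((3 * π / 2) * ((k:ℝ) - 1/2)) ^ ((2:ℝ)/3) :=
      Real.rpow_le_rpow hA0.le (hmA k hk) (by norm_num)
    have h2 := mul_le_mul_of_nonneg_left h1 h1ε.le
    linarith [hxAeq]
  -- J
  set Jr : ℝ := 2/(3*π) * Real.sqrt (2*A) with hJr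
  have hJr0 : 0 ≤ Jr := by positivity
  set J : ℕ := ⌈Jr⌉₊ with hJ
  -- decay bound for j ≥ J + 1
  have hbound2 : ∀ j : ℕ, J + 1 ≤ j →
      Real.exp (T ^ ((1 : ℝ) / 3) *
        (x - (1 - ε) * ((3 * π / 2) * (((j + θ : ℕ) : ℝ) - 1 / 2)) ^ ((2 : ℝ) / 3)))
        ≤ 2*K * (1/((j:ℝ)^2+1)) := by
    intro j hj
    have hj1 : (1:ℝ) ≤ (j:ℝ) := by exact_mod_cast Nat.one_le_iff_ne_zero.mpr (by omega)
    set m : ℝ := (3 * π / 2) * (((j + θ : ℕ) : ℝ) - 1/2) with hm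
    set y : ℝ := m - A with hy
    have hyj : 3*π/2*(j:ℝ) ≤ y := by
      have h0 : (j:ℝ) ≤ ((j:ℝ) + (θ:ℝ) - 1/2) - D := by linarith
      have h1 := mul_le_mul_of_nonneg_left h0 (by positivity : (0:ℝ) ≤ 3*π/2)
      rw [hy, hm, ← hDA]
      push_cast
      linarith
    have hysqrt : Real.sqrt (2*A) ≤ y := by
      have h1 : Jr ≤ (J:ℝ) := Nat.le_ceil _
      have h2 : (J:ℝ) ≤ (j:ℝ) := by exact_mod_cast Nat.le_of_succ_le hj
      have h3 : 3*π/2 * Jr = Real.sqrt (2*A) := by rw [hJr]; field_simp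
      have h4 := mul_le_mul_of_nonneg_left (le_trans h1 h2) (by positivity : (0:ℝ) ≤ 3*π/2)
      linarith
    have hgap := gap_lemma hA2 hysqrt
    have hAy : A + y = m := by rw [hy]; ring
    rw [hAy] at hgap
    -- exponent bound
    have hexp : T ^ ((1:ℝ)/3) * (x - (1-ε) * m ^ ((2:ℝ)/3)) ≤ -(c * (j:ℝ) ^ ((1:ℝ)/3)) := by
      have hy13 : (j:ℝ) ^ ((1:ℝ)/3) ≤ y ^ ((1:ℝ)/3) := by
        apply Real.rpow_le_rpow (by positivity) _ (by norm_num)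
        nlinarith [mul_nonneg (by linarith : (0:ℝ) ≤ 3*π/2 - 1) (by linarith : (0:ℝ) ≤ (j:ℝ))]
      have h1 : x - (1-ε) * m ^ ((2:ℝ)/3) ≤ -((1-ε)/2 * y ^ ((1:ℝ)/3)) := by
        have h2 := mul_le_mul_of_nonneg_left hgap h1ε.le
        linarith [hxAeq]
      calc T ^ ((1:ℝ)/3) * (x - (1-ε) * m ^ ((2:ℝ)/3))
          ≤ T ^ ((1:ℝ)/3) * (-((1-ε)/2 * y ^ ((1:ℝ)/3))) :=
            mul_le_mul_of_nonneg_left h1 hT3.le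
        _ ≤ T ^ ((1:ℝ)/3) * (-((1-ε)/2 * (j:ℝ) ^ ((1:ℝ)/3))) := by
            apply mul_le_mul_of_nonneg_left _ hT3.le
            exact neg_le_neg (mul_le_mul_of_nonneg_left hy13 (by positivity))
        _ = -(c * (j:ℝ) ^ ((1:ℝ)/3)) := by rw [hc]; ring
    have hu0 : 0 < c * (j:ℝ) ^ ((1:ℝ)/3) := by
      have : (0:ℝ) < (j:ℝ) ^ ((1:ℝ)/3) := Real.rpow_pos_of_pos (by linarith) _
      positivity
    have step1 : Real.exp (T ^ ((1:ℝ)/3) * (x - (1-ε) * m ^ ((2:ℝ)/3)))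
        ≤ 720 / (c * (j:ℝ) ^ ((1:ℝ)/3)) ^ 6 :=
      le_trans (Real.exp_le_exp.mpr hexp) (exp_neg_le hu0)
    have hpow : (c * (j:ℝ) ^ ((1:ℝ)/3)) ^ 6 = c ^ 6 * (j:ℝ) ^ 2 := by
      rw [mul_pow]
      congr 1
      rw [← Real.rpow_natCast ((j:ℝ) ^ ((1:ℝ)/3)) 6, ← Real.rpow_mul (Nat.cast_nonneg j),
        ← Real.rpow_natCast (j:ℝ) 2]
      norm_num
    refine le_trans step1 ?_
    have hstep : (j:ℝ)^2 + 1 ≤ 2 * (j:ℝ)^2 := by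
      linarith [mul_nonneg (by linarith : (0:ℝ) ≤ (j:ℝ)-1) (by linarith : (0:ℝ) ≤ (j:ℝ)+1)]
    have key : 720 * ((j:ℝ)^2+1) ≤ 2 * K * (c^6 * (j:ℝ)^2) := by
      have he : 2 * K * (c^6 * (j:ℝ)^2) = 1440 * (j:ℝ)^2 := by
        rw [hK]; field_simp; ring
      rw [he]; linarith
    have hj2 : (0:ℝ) < (j:ℝ)^2 := by positivity
    rw [hpow, mul_one_div, div_le_div_iff₀ (by positivity) (by positivity)]
    linarith [key]
  -- assemble the sum
  set P : ℝ := x ^ ((3:ℝ)/4) / (1 - ε) ^ ((3:ℝ)/4) with hP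
  set F : ℕ → ℝ := fun k : ℕ =>
    if θ ≤ k then
      Real.exp (T ^ ((1 : ℝ) / 3) *
        (x - (1 - ε) * ((3 * π / 2) * ((k : ℝ) - 1 / 2)) ^ ((2 : ℝ) / 3)))
    else 0 with hF
  set h : ℕ → ℝ := fun j : ℕ => (if j ≤ J then (1:ℝ) else 0) + 2*K*(1/((j:ℝ)^2+1)) with hh
  have hFj : ∀ j : ℕ, F (j + θ) =
      Real.exp (T ^ ((1 : ℝ) / 3) *
        (x - (1 - ε) * ((3 * π / 2) * (((j + θ : ℕ) : ℝ) - 1 / 2)) ^ ((2 : ℝ) / 3))) :=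
    fun j => if_pos (Nat.le_add_left θ j)
  have hgle : ∀ j : ℕ, F (j + θ) ≤ h j := by
    intro j
    rw [hFj]
    by_cases hcase : j ≤ J
    · have h1 := hbound1 (j + θ) (Nat.le_add_left θ j)
      have h2 : (0:ℝ) ≤ 2*K*(1/((j:ℝ)^2+1)) := by positivity
      rw [hh]; dsimp only; rw [if_pos hcase]
      linarith
    · push_neg at hcase
      have h1 := hbound2 j hcase
      rw [hh]; dsimp only; rw [if_neg (by omega : ¬ j ≤ J)]
      linarith
  have hF0 : ∀ k : ℕ, 0 ≤ F k := by
    intro k; rw [hF]; dsimp only; split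
    · positivity
    · exact le_refl 0
  have h1sum : Summable (fun j : ℕ => if j ≤ J then (1:ℝ) else 0) := by
    apply summable_of_ne_finset_zero (s := Finset.range (J+1))
    intro b hb
    rw [if_neg]
    intro hbJ
    exact hb (Finset.mem_range.mpr (by omega))
  have h2sum : Summable (fun j : ℕ => 2*K*(1/((j:ℝ)^2+1))) := hbase.mul_left _
  have hhsum : Summable h := h1sum.add h2sum
  have hgsum : Summable (fun j : ℕ => F (j + θ)) :=
    Summable.of_nonneg_of_le (fun j => hF0 _) hgle hhsum
  have hFsum : Summable F := (summable_nat_add_iff θ).mp hgsum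
  refine ⟨hFsum, ?_⟩
  have hsplitsum : ∑' i : ℕ, F i = (∑ i ∈ Finset.range θ, F i) + ∑' j : ℕ, F (j + θ) :=
    (Summable.sum_add_tsum_nat_add θ hFsum).symm
  have hzero : ∑ i ∈ Finset.range θ, F i = 0 := by
    apply Finset.sum_eq_zero
    intro i hi
    rw [hF]; dsimp only
    rw [if_neg]
    have := Finset.mem_range.mp hi
    omega
  have htle : ∑' j : ℕ, F (j + θ) ≤ ∑' j : ℕ, h j := Summable.tsum_le_tsum hgle hgsum hhsum
  have hth : ∑' j : ℕ, h j = ((J:ℝ)+1) + 2*K*S := by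
    rw [hh, Summable.tsum_add h1sum h2sum]
    congr 1
    · rw [tsum_eq_sum (s := Finset.range (J+1))
        (fun b hb => if_neg (fun hbJ => hb (Finset.mem_range.mpr (by omega))))]
      rw [Finset.sum_congr rfl (fun i hi => if_pos (by
        have := Finset.mem_range.mp hi; omega))]
      rw [Finset.sum_const, Finset.card_range]
      push_cast; ring
    · rw [tsum_mul_left]
  -- final numeric estimate
  have hJle : (J:ℝ) ≤ Jr + 1 := (Nat.ceil_lt_add_one hJr0).le
  have hJr_eq : Jr = 2*Real.sqrt 2/(3*π) * P := by
    rw [hJr, Real.sqrt_mul (by norm_num : (0:ℝ) ≤ 2) A, hsqrtA, hP]; ring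
  have hMP : M ≤ P := by
    rw [hP]
    have h1 : x ^ ((3:ℝ)/4) ≤ x ^ ((3:ℝ)/4) / (1-ε) ^ ((3:ℝ)/4) := by
      rw [le_div_iff₀ (by positivity)]
      exact mul_le_of_le_one_right (by positivity)
        (Real.rpow_le_one h1ε.le h1ε1 (by norm_num))
    linarith [hxM, hsx34]
  have hδP : δ * M ≤ δ * P := mul_le_mul_of_nonneg_left hMP hδ0.le
  have hMKS : δ * M = 2*K*S := by rw [hM]; field_simp
  have hQ : (0:ℝ) ≤ 4 / (T*π*(1-ε)^3) := by positivity
  have hsum2 : 2*Real.sqrt 2/(3*π) * P + δ * P = Real.sqrt (2/π) * P := by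
    rw [hδ]; ring
  have hgoal_eq : Real.sqrt (2/π) * x ^ ((3:ℝ)/4) / (1-ε) ^ ((3:ℝ)/4)
      = Real.sqrt (2/π) * P := by rw [hP, mul_div_assoc]
  clear_value c K S δ M D θ A Jr J P F h
  rw [hsplitsum, hzero, zero_add, hgoal_eq]
  calc ∑' j : ℕ, F (j + θ) ≤ ((J:ℝ)+1) + 2*K*S := by rw [← hth]; exact htle
    _ ≤ Real.sqrt (2/π) * P + 4 / (T*π*(1-ε)^3) + 3 := by linarith
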